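/- There exist ε > 0 and R₀ > 1/ε¹⁰ such that for all R > R₀: if w ∈ K⁺ and (nᵢ) is a strictly increasing sequence of integers such that the points [x_{nᵢ} : y_{nᵢ} : z_{nᵢ} : 1] converge in ℙ³ to a point p lying on the hyperplane at infinity {t = 0} (equivalently, the orbit Hⁿ(w) is unbounded along (nᵢ)), then p = [1:0:0:0] or p = [0:1:0:0]. -/

import Mathlib

open Complex Filter Topology

/-- The quotient topology on the projectivization `ℙ³ = ℙ(ℂ⁴)`, induced from
`ℂ⁴ \ {0}`; this is the standard topology of complex projective space. -/
noncomputable instance : TopologicalSpace (Projectivization ℂ (Fin 4 → ℂ)) :=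
  instTopologicalSpaceQuotient

/-- The quadratic automorphism `H(x,y,z) = (xy + az, x² + by, x)` of `ℂ³`. -/
noncomputable def H (a b : ℂ) (w : ℂ × ℂ × ℂ) : ℂ × ℂ × ℂ :=
  (w.1 * w.2.1 + a * w.2.2, w.1 ^ 2 + b * w.2.1, w.1)

/-- `V⁻ = {(x,y,z) : |xy| > max{R, 2|az|, |x|^{3/2}, (1/ε)|y|^{3/2}}}`. -/
noncomputable def Vminus (a : ℂ) (ε R : ℝ) : Set (ℂ × ℂ × ℂ) :=
  {w | ‖w.1 * w.2.1‖ >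
    max R (max (2 * ‖a * w.2.2‖)
      (max (‖w.1‖ ^ ((3 : ℝ) / 2))
        ((1 / ε) * ‖w.2.1‖ ^ ((3 : ℝ) / 2))))}

/-- `U⁺ = ⋃_{n≥0} H⁻ⁿ(V⁻)`, i.e. the points whose forward orbit meets `V⁻`. -/
noncomputable def Uplus (a b : ℂ) (ε R : ℝ) : Set (ℂ × ℂ × ℂ) :=
  ⋃ n : ℕ, (H a b)^[n] ⁻¹' Vminus a ε R

/-- `K⁺ = ℂ³ \ U⁺`. -/
noncomputable def Kplus (a b : ℂ) (ε R : ℝ) : Set (ℂ × ℂ × ℂ) :=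
  (Uplus a b ε R)ᶜ

/-- The embedding `ℂ³ → ℙ³`, `(x,y,z) ↦ [x:y:z:1]`. -/
noncomputable def embed (w : ℂ × ℂ × ℂ) : Projectivization ℂ (Fin 4 → ℂ) :=
  Projectivization.mk ℂ ![w.1, w.2.1, w.2.2, 1] (by
    intro h
    simpa using congrFun h 3)


noncomputable def ratio (j k : Fin 4) : Projectivization ℂ (Fin 4 → ℂ) → ℝ :=
  Quotient.lift (fun v : {v : Fin 4 → ℂ // v ≠ 0} => ‖v.1 j‖ * ‖v.1 k‖ / ‖v.1‖ ^ 2) (by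
    rintro ⟨v, hv⟩ ⟨u, hu⟩ h
    obtain ⟨c, hc⟩ := h
    simp only at hc
    subst hc
    have hc : ‖(c : ℂ)‖ ≠ 0 := norm_ne_zero_iff.mpr c.ne_zero
    simp only [Pi.smul_apply, Units.smul_def, norm_smul, smul_eq_mul, norm_mul]
    rw [mul_pow, show ‖(c:ℂ)‖ * ‖u j‖ * (‖(c:ℂ)‖ * ‖u k‖) = ‖(c:ℂ)‖^2 * (‖u j‖ * ‖u k‖) by ring,
      mul_div_mul_left _ _ (pow_ne_zero 2 hc)])

lemma ratio_cont (j k : Fin 4) : Continuous (ratio j k) := by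
  apply Continuous.quotient_lift
  apply Continuous.div
  · exact (((continuous_apply j).comp continuous_subtype_val).norm.mul
      ((continuous_apply k).comp continuous_subtype_val).norm)
  · exact (continuous_subtype_val.norm.pow 2)
  · intro v
    exact pow_ne_zero 2 (norm_ne_zero_iff.mpr v.2)

lemma ratio_rep (j k : Fin 4) (p : Projectivization ℂ (Fin 4 → ℂ)) :
    ratio j k p = ‖p.rep j‖ * ‖p.rep k‖ / ‖p.rep‖ ^ 2 := by
  conv_lhs => rw [← p.mk_rep]
  rfl

lemma rpow32 (x : ℝ) (hx : 0 ≤ x) : x ^ ((3:ℝ)/2) = x * Real.sqrt x := by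
  rcases eq_or_lt_of_le hx with h | h
  · rw [← h, Real.zero_rpow (by norm_num), Real.sqrt_zero, mul_zero]
  · rw [show (3:ℝ)/2 = 1 + 1/2 by norm_num, Real.rpow_add h, Real.rpow_one,
      ← Real.sqrt_eq_rpow]

lemma sqrt_le_self' (x : ℝ) (hx : 1 ≤ x) : Real.sqrt x ≤ x := by
  have : x ≤ x^2 := by nlinarith
  calc Real.sqrt x ≤ Real.sqrt (x^2) := Real.sqrt_le_sqrt this
    _ = x := Real.sqrt_sq (by linarith)

lemma Hx (a b : ℂ) (w : ℂ × ℂ × ℂ) (n : ℕ) :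
    ((H a b)^[n+1] w).1 = ((H a b)^[n] w).1 * ((H a b)^[n] w).2.1 + a * ((H a b)^[n] w).2.2 := by
  rw [Function.iterate_succ_apply']; rfl

lemma Hy (a b : ℂ) (w : ℂ × ℂ × ℂ) (n : ℕ) :
    ((H a b)^[n+1] w).2.1 = ((H a b)^[n] w).1 ^ 2 + b * ((H a b)^[n] w).2.1 := by
  rw [Function.iterate_succ_apply']; rfl

lemma Hz (a b : ℂ) (w : ℂ × ℂ × ℂ) (n : ℕ) :
    ((H a b)^[n+1] w).2.2 = ((H a b)^[n] w).1 := by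
  rw [Function.iterate_succ_apply']; rfl

noncomputable def vfun (a b : ℂ) (w : ℂ × ℂ × ℂ) (ni : ℕ → ℕ) (i : ℕ) : Fin 4 → ℂ :=
  ![((H a b)^[ni i] w).1, ((H a b)^[ni i] w).2.1, ((H a b)^[ni i] w).2.2, 1]

/-- Key backward induction: if the invariant holds at time `m`, then `‖w.1‖ ≥ T`. -/
lemma key_step (a b : ℂ) (ha : a ≠ 0) (hb : b ≠ 0) (ε R T : ℝ)
    (hεb : Real.sqrt (2/‖b‖) < ε) (hR : 0 < R) (w : ℂ × ℂ × ℂ)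
    (hK : ∀ n, (H a b)^[n] w ∉ Vminus a ε R)
    (hT : 2*‖b‖*R + 2*‖b‖ + 4*‖a‖*‖b‖ + 64*‖a‖^2*‖b‖ + 2 ≤ T) :
    ∀ m : ℕ, (T ≤ ‖((H a b)^[m] w).1‖ ∧
      ‖((H a b)^[m] w).1‖^2/(2*‖b‖) ≤ ‖((H a b)^[m] w).2.1‖ ∧
      ‖((H a b)^[m] w).2.1‖ ≤ 2*‖((H a b)^[m] w).1‖^2/‖b‖) →
    T ≤ ‖w.1‖ := by
  have hB0 : (0:ℝ) < ‖b‖ := norm_pos_iff.mpr hb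
  have hA0 : (0:ℝ) < ‖a‖ := norm_pos_iff.mpr ha
  have hε0 : 0 < ε := lt_of_le_of_lt (Real.sqrt_nonneg _) hεb
  have hab1 : (0:ℝ) < ‖b‖*R := mul_pos hB0 hR
  have hab2 : (0:ℝ) < ‖a‖*‖b‖ := mul_pos hA0 hB0
  have hab3 : (0:ℝ) < ‖a‖^2*‖b‖ := by positivity
  have hT2 : 2 ≤ T := by linarith only [hT, hab1, hab2, hab3, hB0]
  intro m
  induction m with
  | zero => intro h; simpa using h.1
  | succ m ih =>
    rintro ⟨hx, hy1, hy2⟩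
    apply ih
    set X := ‖((H a b)^[m+1] w).1‖ with hX
    set Y := ‖((H a b)^[m+1] w).2.1‖ with hY
    set X' := ‖((H a b)^[m] w).1‖ with hX'
    set Y' := ‖((H a b)^[m] w).2.1‖ with hY'
    have hX1 : 1 ≤ X := by linarith only [hx, hT2]
    have hX0 : 0 < X := by linarith only [hX1]
    have hy1' : X^2 ≤ 2*‖b‖*Y := by
      rw [div_le_iff₀ (by positivity)] at hy1; linarith only [hy1]
    have hy2' : ‖b‖*Y ≤ 2*X^2 := by
      rw [le_div_iff₀ hB0] at hy2; linarith only [hy2]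
    have hY0 : 0 < Y := by nlinarith [pow_pos hX0 2, hy1', hB0]
    have hx3' : X ≤ X^3 := by
      linarith only [mul_le_mul_of_nonneg_left (one_le_pow₀ hX1 (n := 2)) hX0.le]
    have h2BX : 2*‖b‖ < X := by linarith only [hT, hx, hab1, hab2, hab3]
    -- the not-in-Vminus inequality at time m+1
    have notin := hK (m+1)
    rw [Vminus, Set.mem_setOf_eq, not_lt] at notin
    rw [norm_mul, norm_mul, Hz a b w m] at notin
    rw [← hX, ← hY, ← hX'] at notin
    -- claims
    have c1 : R < X * Y := by
      have h1 : X^3 ≤ 2*‖b‖*(X*Y) := by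
        linarith only [mul_le_mul_of_nonneg_left hy1' hX0.le]
      have h2 : 2*‖b‖*R < X := by linarith only [hT, hx, hab2, hab3, hB0]
      have h3 : (2*‖b‖)*R < (2*‖b‖)*(X*Y) := by linarith only [h1, h2, hx3']
      exact lt_of_mul_lt_mul_left h3 (by positivity)
    have hXltY : X < Y := by
      have h3 : (2*‖b‖)*X < (2*‖b‖)*Y := by
        linarith only [mul_lt_mul_of_pos_right h2BX hX0, hy1']
      exact lt_of_mul_lt_mul_left h3 (by positivity)
    have c2 : X ^ ((3:ℝ)/2) < X * Y := by
      rw [rpow32 X (by linarith only [hX0])]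
      have h1 : Real.sqrt X ≤ X := sqrt_le_self' X hX1
      linarith only [mul_le_mul_of_nonneg_left h1 hX0.le, mul_lt_mul_of_pos_left hXltY hX0]
    have c3 : (1/ε) * Y ^ ((3:ℝ)/2) < X * Y := by
      rw [rpow32 Y (by linarith only [hY0])]
      have hsY : Real.sqrt Y ≤ Real.sqrt (2/‖b‖) * X := by
        have h1 : Y ≤ (2/‖b‖) * X^2 := by
          rw [div_mul_eq_mul_div, le_div_iff₀ hB0]; linarith only [hy2']
        calc Real.sqrt Y ≤ Real.sqrt ((2/‖b‖) * X^2) := Real.sqrt_le_sqrt h1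
          _ = Real.sqrt (2/‖b‖) * X := by
              rw [Real.sqrt_mul (by positivity), Real.sqrt_sq (by linarith only [hX0])]
      have hsY2 : Real.sqrt Y < ε * X :=
        lt_of_le_of_lt hsY (mul_lt_mul_of_pos_right hεb hX0)
      calc (1/ε) * (Y * Real.sqrt Y) < (1/ε) * (Y * (ε * X)) := by
            exact mul_lt_mul_of_pos_left (mul_lt_mul_of_pos_left hsY2 hY0) (by positivity)
        _ = X * Y := by field_simp
    -- only the `z`-branch of the max can hold
    have main : X * Y ≤ 2 * (‖a‖ * X') := by
      rcases le_max_iff.mp notin with h | h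
      · linarith only [h, c1]
      rcases le_max_iff.mp h with h2 | h2
      · exact h2
      rcases le_max_iff.mp h2 with h3 | h3
      · linarith only [h3, c2]
      · linarith only [h3, c3]
    have h4 : X^3 ≤ 4*‖a‖*‖b‖*X' := by
      linarith only [mul_le_mul_of_nonneg_left hy1' hX0.le,
        mul_le_mul_of_nonneg_left main hB0.le]
    have hTX' : T ≤ X' := by
      have hT3 : T^3 ≤ X^3 := pow_le_pow_left₀ (by linarith only [hT2]) hx 3
      have hab : 4*‖a‖*‖b‖ ≤ T^2 := by
        nlinarith [sq_nonneg (T-2), hT, hab1, hab3]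
      have h8 : 4*‖a‖*‖b‖*T ≤ T^3 := by
        linarith only [mul_le_mul_of_nonneg_left hab (by linarith only [hT2] : (0:ℝ) ≤ T)]
      have h9 : (4*‖a‖*‖b‖)*T ≤ (4*‖a‖*‖b‖)*X' := by linarith only [h8, hT3, h4]
      exact le_of_mul_le_mul_left h9 (by positivity)
    have h5 : X^6 ≤ 16*‖a‖^2*‖b‖^2*X'^2 := by
      linarith only [mul_self_le_mul_self (by positivity : (0:ℝ) ≤ X^3) h4]
    have h6 : 64*‖a‖^2*‖b‖ ≤ X^4 := by
      have hx3 : (1:ℝ) ≤ X^3 := one_le_pow₀ hX1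
      linarith only [mul_le_mul_of_nonneg_left hx3 hX0.le, hT, hx, hab1, hab2, hB0]
    have h7 : 4*X^2 ≤ ‖b‖*X'^2 := by
      have h6x : 64*‖a‖^2*‖b‖*X^2 ≤ X^6 := by
        linarith only [mul_le_mul_of_nonneg_right h6 (sq_nonneg X)]
      have h10 : (16*‖a‖^2*‖b‖)*(4*X^2) ≤ (16*‖a‖^2*‖b‖)*(‖b‖*X'^2) := by
        linarith only [h6x, h5]
      exact le_of_mul_le_mul_left h10 (by positivity)
    have hsmall : Y ≤ X'^2/2 := by
      rw [le_div_iff₀ (by norm_num : (0:ℝ) < 2)]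
      have h11 : ‖b‖*(Y*2) ≤ ‖b‖*(X'^2) := by linarith only [hy2', h7]
      exact le_of_mul_le_mul_left h11 hB0
    have hrel : ((H a b)^[m+1] w).2.1 - ((H a b)^[m] w).1^2 = b * ((H a b)^[m] w).2.1 := by
      rw [Hy a b w m]; ring
    have hnorm : ‖b‖ * Y' = ‖((H a b)^[m+1] w).2.1 - ((H a b)^[m] w).1^2‖ := by
      rw [hrel, norm_mul]
    refine ⟨hTX', ?_, ?_⟩
    · have hlow : X'^2 - Y ≤ ‖b‖ * Y' := by
        rw [hnorm]
        calc X'^2 - Y = ‖((H a b)^[m] w).1^2‖ - Y := by rw [norm_pow]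
          _ ≤ _ := by rw [norm_sub_rev]; exact norm_sub_norm_le _ _
      rw [div_le_iff₀ (by positivity)]
      linarith only [hlow, hsmall, sq_nonneg X']
    · have hup : ‖b‖ * Y' ≤ Y + X'^2 := by
        rw [hnorm]
        calc ‖((H a b)^[m+1] w).2.1 - ((H a b)^[m] w).1^2‖
            ≤ Y + ‖((H a b)^[m] w).1^2‖ := norm_sub_le _ _
          _ = Y + X'^2 := by rw [norm_pow]
      rw [le_div_iff₀ hB0]
      linarith only [hup, hsmall, sq_nonneg X']

set_option maxHeartbeats 1000000 in
/-- there exist `ε > 0` and `R₀ > 1/ε¹⁰` such that for all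
`R > R₀`: if `w ∈ K⁺` and `(nᵢ)` is a strictly increasing sequence of
integers such that `[x_{nᵢ} : y_{nᵢ} : z_{nᵢ} : 1]` converges in `ℙ³` to a
point `p` on the hyperplane at infinity `{t = 0}`, then `p = [1:0:0:0]` or
`p = [0:1:0:0]`. -/
theorem stmt16 (a b : ℂ) (ha : a ≠ 0) (hb : b ≠ 0) :
    ∃ ε > (0 : ℝ), ∃ R₀ > 1 / ε ^ 10, ∀ R > R₀, ∀ w ∈ Kplus a b ε R,
      ∀ ni : ℕ → ℕ, StrictMono ni →
      ∀ p : Projectivization ℂ (Fin 4 → ℂ),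
        Tendsto (fun i : ℕ => embed ((H a b)^[ni i] w)) atTop (nhds p) →
        p.rep 3 = 0 →
        p = Projectivization.mk ℂ ![1, 0, 0, 0] (by
              intro h; simpa using congrFun h 0) ∨
        p = Projectivization.mk ℂ ![0, 1, 0, 0] (by
              intro h; simpa using congrFun h 1) := by
  have hb0 : (0:ℝ) < ‖b‖ := norm_pos_iff.mpr hb
  have ha0 : (0:ℝ) < ‖a‖ := norm_pos_iff.mpr ha
  refine ⟨Real.sqrt (2/‖b‖) + 1, by positivity, 1/(Real.sqrt (2/‖b‖) + 1)^10 + 1,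
    lt_add_one _, ?_⟩
  intro R hR w hw ni hni p htend hp3
  set ε := Real.sqrt (2/‖b‖) + 1 with hεdef
  have hεb : Real.sqrt (2/‖b‖) < ε := by rw [hεdef]; exact lt_add_one _
  have hε0 : 0 < ε := lt_of_le_of_lt (Real.sqrt_nonneg _) hεb
  have hε1 : 1 ≤ ε := by rw [hεdef]; linarith [Real.sqrt_nonneg (2/‖b‖)]
  have hR0 : 0 < R := by
    have h1 : (0:ℝ) < 1/ε^10 + 1 := by positivity
    linarith
  have hK : ∀ n, (H a b)^[n] w ∉ Vminus a ε R := by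
    intro n hn
    exact hw (Set.mem_iUnion.mpr ⟨n, hn⟩)
  have hrep0 : (0:ℝ) < ‖p.rep‖ := norm_pos_iff.mpr p.rep_nonzero
  -- coordinate-ratio limits
  have hlim : ∀ j k : Fin 4, Tendsto
      (fun i => ‖vfun a b w ni i j‖ * ‖vfun a b w ni i k‖ / ‖vfun a b w ni i‖^2)
      atTop (nhds (‖p.rep j‖ * ‖p.rep k‖ / ‖p.rep‖^2)) := by
    intro j k
    have h1 := ((ratio_cont j k).tendsto p).comp htend
    rw [ratio_rep] at h1
    exact h1.congr fun i => rfl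
  have hm1 : ∀ i, 1 ≤ ‖vfun a b w ni i‖ := by
    intro i
    have h := norm_le_pi_norm (vfun a b w ni i) 3
    rw [show vfun a b w ni i 3 = 1 from rfl] at h
    simpa using h
  have hcomp : ∀ i (j : Fin 4), ‖vfun a b w ni i j‖ ≤ ‖vfun a b w ni i‖ :=
    fun i j => norm_le_pi_norm _ j
  have hmtop : Tendsto (fun i => ‖vfun a b w ni i‖) atTop atTop := by
    have h33 := hlim 3 3
    rw [hp3] at h33
    simp only [norm_zero, mul_zero, zero_mul, zero_div] at h33
    have h33' : Tendsto (fun i => 1 / ‖vfun a b w ni i‖^2) atTop (nhds 0) := by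
      refine h33.congr fun i => ?_
      rw [show vfun a b w ni i 3 = 1 from rfl]
      norm_num
    rw [tendsto_atTop]
    intro C
    have hM1 : (1:ℝ) ≤ max C 1 := le_max_right _ _
    have hδ : (0:ℝ) < 1/(max C 1)^2 := by positivity
    filter_upwards [h33'.eventually_lt_const hδ] with i hi
    have h2 := hm1 i
    rw [div_lt_div_iff₀ (by positivity) (by positivity)] at hi
    have h3 : max C 1 < ‖vfun a b w ni i‖ := by
      apply lt_of_pow_lt_pow_left₀ 2 (by linarith)
      nlinarith [hi]
    linarith [le_max_left C 1]
  -- the limit cannot have nonzero z-coordinate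
  have hZ : p.rep 2 = 0 := by
    by_contra hZ0
    have hq0 : (0:ℝ) < ‖p.rep 2‖ * ‖p.rep 2‖ / ‖p.rep‖^2 :=
      div_pos (mul_pos (norm_pos_iff.mpr hZ0) (norm_pos_iff.mpr hZ0)) (pow_pos hrep0 2)
    set s := ‖p.rep 2‖ * ‖p.rep 2‖ / ‖p.rep‖^2 with hsdef
    have h22 := hlim 2 2
    have hev1 := h22.eventually_const_lt (show s/2 < s by linarith)
    set c2 := Real.sqrt (s/2) with hc2def
    have hc20 : 0 < c2 := Real.sqrt_pos.mpr (by linarith)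
    have hev2 : ∀ᶠ i in atTop, c2 * ‖vfun a b w ni i‖ ≤ ‖vfun a b w ni i 2‖ := by
      filter_upwards [hev1] with i hi
      have hm0 : (0:ℝ) < ‖vfun a b w ni i‖ := lt_of_lt_of_le one_pos (hm1 i)
      rw [lt_div_iff₀ (by positivity)] at hi
      calc c2 * ‖vfun a b w ni i‖
          = Real.sqrt ((s/2) * ‖vfun a b w ni i‖^2) := by
            rw [Real.sqrt_mul (by linarith), Real.sqrt_sq hm0.le]
        _ ≤ Real.sqrt (‖vfun a b w ni i 2‖ * ‖vfun a b w ni i 2‖) :=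
            Real.sqrt_le_sqrt (by linarith)
        _ = ‖vfun a b w ni i 2‖ := Real.sqrt_mul_self (norm_nonneg _)
    have hztop : Tendsto (fun i => ‖vfun a b w ni i 2‖) atTop atTop :=
      tendsto_atTop_mono' atTop hev2 (hmtop.const_mul_atTop hc20)
    set Kv := 1/c2 + 1 with hKvdef
    have hKv0 : 0 < Kv := by positivity
    have hKvc : 1/c2 ≤ Kv := by linarith
    set T := max (2*‖b‖*R + 2*‖b‖ + 4*‖a‖*‖b‖ + 64*‖a‖^2*‖b‖ + 2) (‖w.1‖ + 1) with hTdef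
    obtain ⟨i, hiz, hic, hi1⟩ :=
      ((hztop.eventually_ge_atTop (max T (2*Kv+1))).and (hev2.and (eventually_ge_atTop 1))).exists
    have hni1 : 1 ≤ ni i := le_trans hi1 hni.le_apply
    obtain ⟨m', hm'⟩ : ∃ m', ni i = m' + 1 := ⟨ni i - 1, (Nat.succ_pred_eq_of_pos hni1).symm⟩
    have hzx : vfun a b w ni i 2 = ((H a b)^[m'] w).1 := by
      show ((H a b)^[ni i] w).2.2 = _
      rw [hm', Hz]
    have hyrel : ((H a b)^[ni i] w).2.1 = ((H a b)^[m'] w).1^2 + b * ((H a b)^[m'] w).2.1 := by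
      rw [hm', Hy]
    rw [hzx] at hiz hic
    set Z := ‖((H a b)^[m'] w).1‖ with hZdef
    have hZT : T ≤ Z := le_trans (le_max_left _ _) hiz
    have hZK : 2*Kv+1 ≤ Z := le_trans (le_max_right _ _) hiz
    have hZpos : 0 < Z := by linarith
    have hyb : ‖((H a b)^[ni i] w).2.1‖ ≤ Kv * Z := by
      have h1 : ‖vfun a b w ni i 1‖ ≤ ‖vfun a b w ni i‖ := hcomp i 1
      have h2 : ‖vfun a b w ni i‖ ≤ (1/c2) * Z := by
        rw [one_div, inv_mul_eq_div, le_div_iff₀ hc20]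
        linarith [hic]
      have h3 : (1/c2) * Z ≤ Kv * Z := mul_le_mul_of_nonneg_right hKvc hZpos.le
      calc ‖((H a b)^[ni i] w).2.1‖ = ‖vfun a b w ni i 1‖ := rfl
        _ ≤ Kv * Z := le_trans h1 (le_trans h2 h3)
    set Y' := ‖((H a b)^[m'] w).2.1‖ with hY'def
    have hbY : ‖b‖ * Y' = ‖((H a b)^[ni i] w).2.1 - ((H a b)^[m'] w).1^2‖ := by
      rw [show ((H a b)^[ni i] w).2.1 - ((H a b)^[m'] w).1^2 = b * ((H a b)^[m'] w).2.1 by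
        rw [hyrel]; ring, norm_mul]
    have hYlow : Z^2 - Kv*Z ≤ ‖b‖ * Y' := by
      rw [hbY]
      have h1 : Z^2 - ‖((H a b)^[ni i] w).2.1‖ ≤ ‖((H a b)^[ni i] w).2.1 - ((H a b)^[m'] w).1^2‖ := by
        calc Z^2 - ‖((H a b)^[ni i] w).2.1‖
            = ‖((H a b)^[m'] w).1^2‖ - ‖((H a b)^[ni i] w).2.1‖ := by rw [norm_pow]
          _ ≤ ‖((H a b)^[ni i] w).2.1 - ((H a b)^[m'] w).1^2‖ := by
              rw [norm_sub_rev]; exact norm_sub_norm_le _ _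
      linarith [hyb, h1]
    have hYup : ‖b‖ * Y' ≤ Kv*Z + Z^2 := by
      rw [hbY]
      calc ‖((H a b)^[ni i] w).2.1 - ((H a b)^[m'] w).1^2‖
          ≤ ‖((H a b)^[ni i] w).2.1‖ + ‖((H a b)^[m'] w).1^2‖ := norm_sub_le _ _
        _ ≤ Kv*Z + Z^2 := by rw [norm_pow]; linarith [hyb]
    have hKvZ : 2*Kv*Z ≤ Z^2 := by
      nlinarith [mul_le_mul_of_nonneg_right (show 2*Kv ≤ Z by linarith) hZpos.le]
    have inv2 : Z^2/(2*‖b‖) ≤ Y' := by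
      rw [div_le_iff₀ (by positivity)]
      nlinarith [hYlow, hKvZ]
    have inv3 : Y' ≤ 2*Z^2/‖b‖ := by
      rw [le_div_iff₀ hb0]
      nlinarith [hYup, hKvZ, sq_nonneg Z]
    have hfinal := key_step a b ha hb ε R T hεb hR0 w hK (le_max_left _ _) m'
      ⟨hZT, inv2, inv3⟩
    have hwT : ‖w.1‖ + 1 ≤ T := le_max_right _ _
    linarith
  -- the limit cannot have both x and y coordinates nonzero
  have hXY : p.rep 0 = 0 ∨ p.rep 1 = 0 := by
    by_contra hcon
    push_neg at hcon
    obtain ⟨h0, h1⟩ := hcon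
    have hq0 : (0:ℝ) < ‖p.rep 0‖ * ‖p.rep 1‖ / ‖p.rep‖^2 :=
      div_pos (mul_pos (norm_pos_iff.mpr h0) (norm_pos_iff.mpr h1)) (pow_pos hrep0 2)
    set q := ‖p.rep 0‖ * ‖p.rep 1‖ / ‖p.rep‖^2 with hqdef
    have h01 := hlim 0 1
    have hev := h01.eventually_const_lt (show q/2 < q by linarith)
    set c := q/2 with hcdef
    have hc0 : 0 < c := by linarith
    obtain ⟨i, him, hiev⟩ :=
      ((hmtop.eventually_ge_atTop ((R+1)/c + (2*‖a‖+1)/c + 1/c^2 + 1)).and hev).exists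
    set m := ‖vfun a b w ni i‖ with hmdef
    have hm1' : 1 ≤ m := hm1 i
    have hm0 : 0 < m := by linarith
    rw [lt_div_iff₀ (by positivity)] at hiev
    -- hiev : c * m^2 < ‖v i 0‖ * ‖v i 1‖
    have hd1 : (0:ℝ) ≤ (R+1)/c := by positivity
    have hd2 : (0:ℝ) ≤ (2*‖a‖+1)/c := by positivity
    have hd3 : (0:ℝ) ≤ 1/c^2 := by positivity
    have hcm1 : R+1 ≤ c*m := by
      have h2 : c*((R+1)/c) ≤ c*m := by
        apply mul_le_mul_of_nonneg_left _ hc0.le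
        linarith
      rw [mul_div_cancel₀ _ (ne_of_gt hc0)] at h2
      exact h2
    have hcm2 : 2*‖a‖+1 ≤ c*m := by
      have h2 : c*((2*‖a‖+1)/c) ≤ c*m := by
        apply mul_le_mul_of_nonneg_left _ hc0.le
        linarith
      rw [mul_div_cancel₀ _ (ne_of_gt hc0)] at h2
      exact h2
    have key1 : R < c*m^2 := by
      have e1 : (R+1)*m ≤ (c*m)*m := mul_le_mul_of_nonneg_right hcm1 hm0.le
      have e2 : (R+1)*1 ≤ (R+1)*m := mul_le_mul_of_nonneg_left hm1' (by linarith)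
      nlinarith [e1, e2]
    have key2 : 2 * (‖a‖ * ‖vfun a b w ni i 2‖) < c*m^2 := by
      have hZm := hcomp i 2
      have e1 : (2*‖a‖+1)*m ≤ (c*m)*m := mul_le_mul_of_nonneg_right hcm2 hm0.le
      have e2 : (2*‖a‖)*‖vfun a b w ni i 2‖ ≤ (2*‖a‖)*m :=
        mul_le_mul_of_nonneg_left hZm (by linarith)
      nlinarith [e1, e2, hm0]
    have h1c : 1/c < Real.sqrt m := by
      have h2 : (1/c)^2 < m := by
        have : 1/c^2 = (1/c)^2 := by ring
        linarith [him, hd1, hd2]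
      rw [← Real.sqrt_sq (by positivity : (0:ℝ) ≤ 1/c)]
      exact Real.sqrt_lt_sqrt (sq_nonneg _) h2
    have hsqm0 : 0 < Real.sqrt m := Real.sqrt_pos.mpr hm0
    have hsqmm : Real.sqrt m * Real.sqrt m = m := Real.mul_self_sqrt hm0.le
    have hsm : Real.sqrt m < c*m := by
      have h2 : 1 < c * Real.sqrt m := by
        have h3 := mul_lt_mul_of_pos_left h1c hc0
        rwa [mul_one_div, div_self (ne_of_gt hc0)] at h3
      nlinarith [h2, hsqm0, hsqmm]
    have key3 : ‖vfun a b w ni i 0‖ ^ ((3:ℝ)/2) < c*m^2 := by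
      rw [rpow32 _ (norm_nonneg _)]
      have hXm := hcomp i 0
      have h2 : ‖vfun a b w ni i 0‖ * Real.sqrt ‖vfun a b w ni i 0‖ ≤ m * Real.sqrt m :=
        mul_le_mul hXm (Real.sqrt_le_sqrt hXm) (Real.sqrt_nonneg _) hm0.le
      linarith only [h2, mul_lt_mul_of_pos_left hsm hm0]
    have key4 : (1/ε) * ‖vfun a b w ni i 1‖ ^ ((3:ℝ)/2) < c*m^2 := by
      rw [rpow32 _ (norm_nonneg _)]
      have hYm := hcomp i 1
      have h2 : ‖vfun a b w ni i 1‖ * Real.sqrt ‖vfun a b w ni i 1‖ ≤ m * Real.sqrt m :=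
        mul_le_mul hYm (Real.sqrt_le_sqrt hYm) (Real.sqrt_nonneg _) hm0.le
      have h3 : (1/ε) ≤ 1 := by rw [div_le_one hε0]; exact hε1
      have h4 : (1/ε) * (‖vfun a b w ni i 1‖ * Real.sqrt ‖vfun a b w ni i 1‖) ≤
          ‖vfun a b w ni i 1‖ * Real.sqrt ‖vfun a b w ni i 1‖ := by
        nlinarith [mul_nonneg (norm_nonneg (vfun a b w ni i 1)) (Real.sqrt_nonneg ‖vfun a b w ni i 1‖)]
      linarith only [h2, h4, mul_lt_mul_of_pos_left hsm hm0]
    apply hK (ni i)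
    rw [Vminus, Set.mem_setOf_eq]
    rw [norm_mul, norm_mul]
    have hfin : max R (max (2 * (‖a‖ * ‖vfun a b w ni i 2‖))
        (max (‖vfun a b w ni i 0‖ ^ ((3:ℝ)/2)) ((1/ε) * ‖vfun a b w ni i 1‖ ^ ((3:ℝ)/2))))
        < ‖vfun a b w ni i 0‖ * ‖vfun a b w ni i 1‖ :=
      lt_trans (max_lt key1 (max_lt key2 (max_lt key3 key4))) hiev
    exact hfin
  -- conclusion
  rcases hXY with h0 | h1
  · right
    have h1' : p.rep 1 ≠ 0 := by
      intro h1
      apply p.rep_nonzero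
      funext j
      fin_cases j
      · simpa using h0
      · simpa using h1
      · simpa using hZ
      · simpa using hp3
    rw [← p.mk_rep, Projectivization.mk_eq_mk_iff]
    refine ⟨Units.mk0 (p.rep 1) h1', ?_⟩
    funext j
    fin_cases j <;>
      simp [Units.smul_def, h0, hZ, hp3]
  · left
    have h0' : p.rep 0 ≠ 0 := by
      intro h0
      apply p.rep_nonzero
      funext j
      fin_cases j
      · simpa using h0
      · simpa using h1
      · simpa using hZ
      · simpa using hp3
    rw [← p.mk_rep, Projectivization.mk_eq_mk_iff]
    refine ⟨Units.mk0 (p.rep 0) h0', ?_⟩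
    funext j
    fin_cases j <;>
      simp [Units.smul_def, h1, hZ, hp3]
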